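/- If a function f: ℝⁿ → ℝⁿ satisfies the one-sided Lipschitz (QUAD) condition (x-y)ᵀ(f(x)-f(y)) ≤ (x-y)ᵀW(x-y) with W a diagonal matrix whose maximum eigenvalue w_max is negative, and g: ℝⁿ → ℝⁿ satisfies ‖g(x)‖ ≤ M for all x and ‖f(0)‖ ≤ h₀, then along any solution of ẋ = f(x) + g(x) the function U(x) = ½‖x‖² satisfies dU/dt ≤ w_max‖x‖² + ‖x‖(M + h₀). Consequently U is strictly decreasing whenever ‖x‖ > (M + h₀)/(-w_max). -/

import Mathlib

open Matrix Finset
open RealInnerProductSpace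

/-- If `f` satisfies the QUAD (one-sided Lipschitz) condition with a diagonal
matrix `W` (diagonal entries `w`) whose maximum eigenvalue `wmax` is negative, `g` is bounded
by `M` and `‖f 0‖ ≤ h₀`, then along any solution of `ẋ = f x + g x`, the function
`U(x) = ½‖x‖²` has derivative `⟪x, f x + g x⟫` which is bounded by
`wmax‖x‖² + ‖x‖(M + h₀)`; in particular the derivative is negative (U strictly decreasing)
whenever `‖x‖ > (M + h₀)/(-wmax)`. -/
theorem stmt0 (n : ℕ) (f g : EuclideanSpace ℝ (Fin n) → EuclideanSpace ℝ (Fin n))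
    (w : Fin n → ℝ) (wmax : ℝ) (hwmax : IsGreatest (Set.range w) wmax) (hwneg : wmax < 0)
    (M h₀ : ℝ) (hM : 0 ≤ M) (hh₀ : 0 ≤ h₀)
    (hg : ∀ x, ‖g x‖ ≤ M) (hf0 : ‖f 0‖ ≤ h₀)
    (hQUAD : ∀ x y : EuclideanSpace ℝ (Fin n),
      ⟪x - y, f x - f y⟫ ≤ ∑ i, w i * (x i - y i) ^ 2)
    (x : ℝ → EuclideanSpace ℝ (Fin n))
    (hx : ∀ t, HasDerivAt x (f (x t) + g (x t)) t) :
    (∀ t : ℝ,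
      HasDerivAt (fun s => (1 / 2 : ℝ) * ‖x s‖ ^ 2) (⟪x t, f (x t) + g (x t)⟫) t ∧
      ⟪x t, f (x t) + g (x t)⟫ ≤ wmax * ‖x t‖ ^ 2 + ‖x t‖ * (M + h₀)) ∧
    (∀ t : ℝ, ‖x t‖ > (M + h₀) / (-wmax) → ⟪x t, f (x t) + g (x t)⟫ < 0) := by
  have key : ∀ t, ⟪x t, f (x t) + g (x t)⟫ ≤ wmax * ‖x t‖ ^ 2 + ‖x t‖ * (M + h₀) := by
    intro t
    set z := x t with hz
    have h1 : ⟪z, f z + g z⟫ = ⟪z - 0, f z - f 0⟫ + ⟪z, f 0⟫ + ⟪z, g z⟫ := by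
      simp [inner_sub_right, inner_add_right]
    have h2 : ⟪z - 0, f z - f 0⟫ ≤ ∑ i, w i * (z i - (0 : EuclideanSpace ℝ (Fin n)) i) ^ 2 :=
      hQUAD z 0
    have h3 : ∑ i, w i * (z i - (0 : EuclideanSpace ℝ (Fin n)) i) ^ 2 ≤ wmax * ‖z‖ ^ 2 := by
      have hnorm : ‖z‖ ^ 2 = ∑ i, z i ^ 2 := by
        rw [← real_inner_self_eq_norm_sq]
        simp [PiLp.inner_apply, sq]
        rw [EuclideanSpace.norm_eq, Real.mul_self_sqrt (by positivity)]
        exact Finset.sum_congr rfl fun i _ => by rw [Real.norm_eq_abs, sq_abs, sq]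
      rw [hnorm, Finset.mul_sum]
      apply Finset.sum_le_sum
      intro i _
      have hwi : w i ≤ wmax := hwmax.2 ⟨i, rfl⟩
      have : (z i - (0 : EuclideanSpace ℝ (Fin n)) i) ^ 2 = z i ^ 2 := by simp
      rw [this]
      exact mul_le_mul_of_nonneg_right hwi (sq_nonneg _)
    have h4 : ⟪z, f 0⟫ ≤ ‖z‖ * h₀ :=
      (real_inner_le_norm _ _).trans (mul_le_mul_of_nonneg_left hf0 (norm_nonneg _))
    have h5 : ⟪z, g z⟫ ≤ ‖z‖ * M :=
      (real_inner_le_norm _ _).trans (mul_le_mul_of_nonneg_left (hg z) (norm_nonneg _))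
    rw [h1]
    nlinarith [h2.trans h3]
  constructor
  · intro t
    refine ⟨?_, key t⟩
    have h := ((hx t).inner ℝ (hx t)).const_mul (1 / 2 : ℝ)
    have heq : (fun s => (1 / 2 : ℝ) * ⟪x s, x s⟫) = fun s => (1 / 2 : ℝ) * ‖x s‖ ^ 2 := by
      funext s; rw [real_inner_self_eq_norm_sq]
    rw [heq] at h
    refine h.congr_deriv ?_
    rw [real_inner_comm (x t)]
    ring
  · intro t ht
    have hpos : 0 < ‖x t‖ := lt_of_le_of_lt (div_nonneg (by linarith) (by linarith)) ht
    have h6 : (M + h₀) < ‖x t‖ * (-wmax) :=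
      (div_lt_iff₀ (show (0:ℝ) < -wmax by linarith)).mp ht
    have := key t
    nlinarith
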